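/- Let V be a real vector space and let Ω be an open subset of the projective sphere S(V) (the quotient of V∖{0} by positive scalings) with Ω ≠ S(V). Then Ω is convex (i.e. its preimage in V is a convex cone) if and only if there exists an affine chart A of S(V) (a connected component of the complement of a projective hyperplane) such that Ω ⊆ A and Ω is convex in the usual affine sense in A. -/

import Mathlib

open Set

namespace SphereConvexity

variable {V : Type*} [NormedAddCommGroup V] [NormedSpace ℝ V]

/-- The preimage in `V ∖ {0}` of a subset `Ω` of the projective sphere
`S(V) = (V ∖ {0}) / ℝ₊` of half-lines of `V`. -/
def pre (Ω : Set (Module.Ray ℝ V)) : Set V :=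
  {x : V | ∃ h : x ≠ 0, rayOfNeZero ℝ x h ∈ Ω}

lemma smul_mem_pre {Ω : Set (Module.Ray ℝ V)} {c : ℝ} (hc : 0 < c) {x : V}
    (hx : x ∈ pre Ω) : c • x ∈ pre Ω := by
  obtain ⟨hx0, hxΩ⟩ := hx
  have h : c • x ≠ 0 := smul_ne_zero hc.ne' hx0
  refine ⟨h, ?_⟩
  have : rayOfNeZero ℝ (c • x) h = rayOfNeZero ℝ x hx0 :=
    (ray_eq_iff _ _).2 ((SameRay.sameRay_pos_smul_right x hc).symm)
  rwa [this]

theorem convex_iff_exists_affine_chart (Ω : Set (Module.Ray ℝ V))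
    (hopen : IsOpen (pre Ω)) (hne : Ω ≠ Set.univ) :
    (Convex ℝ (insert (0 : V) (pre Ω)) ∧
      ∀ c : ℝ, 0 < c → ∀ x ∈ insert (0 : V) (pre Ω), c • x ∈ insert (0 : V) (pre Ω)) ↔
    ∃ f : V →ₗ[ℝ] ℝ, f ≠ 0 ∧
      (∀ x ∈ pre Ω, 0 < f x) ∧
      Convex ℝ {x : V | f x = 1 ∧ x ∈ pre Ω} := by
  constructor
  · rintro ⟨hconv, hscal⟩
    -- key: no antipodal pair in pre Ω
    have hanti : ∀ x : V, x ∈ pre Ω → -x ∈ pre Ω → False := by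
      intro x hx hnx
      obtain ⟨ε₁, hε₁, hb₁⟩ := Metric.isOpen_iff.1 hopen x hx
      obtain ⟨ε₂, hε₂, hb₂⟩ := Metric.isOpen_iff.1 hopen (-x) hnx
      set ε := min ε₁ ε₂ with hε
      have hεpos : 0 < ε := lt_min hε₁ hε₂
      have hball : ∀ u : V, ‖u‖ < ε → u ∈ insert (0 : V) (pre Ω) := by
        intro u hu
        have h1 : x + u ∈ pre Ω := by
          apply hb₁
          simp only [Metric.mem_ball, dist_eq_norm]
          simpa using lt_of_lt_of_le hu (min_le_left _ _)
        have h2 : -x + u ∈ pre Ω := by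
          apply hb₂
          simp only [Metric.mem_ball, dist_eq_norm]
          simpa using lt_of_lt_of_le hu (min_le_right _ _)
        have := hconv (mem_insert_of_mem _ h1) (mem_insert_of_mem _ h2)
          (by norm_num : (0:ℝ) ≤ 1/2) (by norm_num : (0:ℝ) ≤ 1/2) (by norm_num)
        have heq : (1/2 : ℝ) • (x + u) + (1/2 : ℝ) • (-x + u) = u := by
          module
        rwa [heq] at this
      -- conclude Ω = univ
      apply hne
      rw [Set.eq_univ_iff_forall]
      intro r
      induction r using Module.Ray.ind with
      | _ w hw =>
        have hwn : (0:ℝ) < ‖w‖ := norm_pos_iff.2 hw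
        set c : ℝ := ε / (2 * ‖w‖) with hc
        have hcpos : 0 < c := by positivity
        have hcw : ‖c • w‖ < ε := by
          rw [norm_smul, Real.norm_eq_abs, abs_of_pos hcpos, hc]
          rw [div_mul_eq_mul_div, div_lt_iff₀ (by positivity)]
          nlinarith
        have hmem : c • w ∈ insert (0:V) (pre Ω) := hball _ hcw
        have hcw0 : c • w ≠ 0 := smul_ne_zero hcpos.ne' hw
        have hmem' : c • w ∈ pre Ω := by
          rcases hmem with h | h
          · exact absurd h hcw0
          · exact h
        have : (c⁻¹ : ℝ) • c • w ∈ pre Ω := smul_mem_pre (inv_pos.2 hcpos) hmem'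
        rw [smul_smul, inv_mul_cancel₀ hcpos.ne', one_smul] at this
        exact this.2
    -- pre Ω is convex
    have hpreconv : Convex ℝ (pre Ω) := by
      intro x hx y hy a b ha hb hab
      have hz : a • x + b • y ∈ insert (0:V) (pre Ω) :=
        hconv (mem_insert_of_mem _ hx) (mem_insert_of_mem _ hy) ha hb hab
      rcases hz with h | h
      · -- a • x + b • y = 0
        exfalso
        rcases eq_or_lt_of_le ha with ha0 | ha'
        · have hb1 : b = 1 := by linarith
          rw [← ha0, hb1, zero_smul, one_smul, zero_add] at h
          exact hy.1 h
        rcases eq_or_lt_of_le hb with hb0 | hb'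
        · have ha1 : a = 1 := by linarith
          rw [← hb0, ha1, zero_smul, one_smul, add_zero] at h
          exact hx.1 h
        have hxy : -x = (b / a) • y := by
          have : a • x = -(b • y) := by
            rw [eq_neg_iff_add_eq_zero]; exact h
          have := congrArg (fun v => (a⁻¹ : ℝ) • v) this
          simp only [smul_smul, inv_mul_cancel₀ ha'.ne', one_smul, smul_neg] at this
          rw [this, div_eq_inv_mul, ← smul_smul, neg_neg]
        have : -x ∈ pre Ω := by
          rw [hxy]; exact smul_mem_pre (by positivity) hy
        exact hanti x hx this
      · exact h
    obtain ⟨r, hr⟩ := Set.ne_univ_iff_exists_notMem _ |>.1 hne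
    by_cases hΩ : (pre Ω).Nonempty
    · -- separation: 0 ∉ pre Ω, pre Ω open convex nonempty
      have h0 : (0 : V) ∉ pre Ω := fun ⟨h, _⟩ => h rfl
      obtain ⟨g, hg⟩ := geometric_hahn_banach_open_point hpreconv hopen h0
      refine ⟨-(g.toLinearMap), ?_, ?_, ?_⟩
      · obtain ⟨x, hx⟩ := hΩ
        intro hcon
        have h1 := hg x hx
        rw [map_zero] at h1
        have h0 : (-(g.toLinearMap)) x = 0 := by rw [hcon]; rfl
        simp only [LinearMap.neg_apply, ContinuousLinearMap.coe_coe, neg_eq_zero] at h0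
        rw [h0] at h1
        exact lt_irrefl _ h1
      · intro x hx
        have := hg x hx
        simp only [map_zero] at this
        simpa using this
      · have : {x : V | (-(g.toLinearMap)) x = 1 ∧ x ∈ pre Ω} =
            {x : V | (-(g.toLinearMap)) x = 1} ∩ pre Ω := rfl
        rw [this]
        have hhyp : Convex ℝ {x : V | (-(g.toLinearMap)) x = 1} :=
          (convex_singleton (1:ℝ)).linear_preimage (-(g.toLinearMap))
        exact hhyp.inter hpreconv
    · -- pre Ω empty
      push_neg at hΩ
      induction r using Module.Ray.ind with
      | _ v hv =>
        obtain ⟨g, _, hgv⟩ := exists_dual_vector ℝ v (norm_ne_zero_iff.2 hv)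
        refine ⟨g.toLinearMap, ?_, ?_, ?_⟩
        · intro hcon
          have : g v = 0 := by
            have := congrArg (fun f => f v) hcon; simpa using this
          rw [hgv] at this
          exact hv (norm_eq_zero.1 this)
        · intro x hx; rw [hΩ] at hx; exact absurd hx (Set.notMem_empty x)
        · intro x hx; rw [hΩ] at hx; exact absurd hx.2 (Set.notMem_empty x)
  · rintro ⟨f, hf0, hfpos, hslice⟩
    constructor
    · intro x hx y hy a b ha hb hab
      rcases hx with hx0 | hx <;> rcases hy with hy0 | hy
      · subst hx0; subst hy0; simp
      · subst hx0
        rcases eq_or_lt_of_le hb with hb0 | hb'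
        · simp [← hb0]
        · rw [smul_zero, zero_add]
          exact mem_insert_of_mem _ (smul_mem_pre hb' hy)
      · subst hy0
        rcases eq_or_lt_of_le ha with ha0 | ha'
        · simp [← ha0]
        · rw [smul_zero, add_zero]
          exact mem_insert_of_mem _ (smul_mem_pre ha' hx)
      · rcases eq_or_lt_of_le ha with ha0 | ha'
        · have hb1 : b = 1 := by linarith
          rw [← ha0, hb1, zero_smul, one_smul, zero_add]
          exact mem_insert_of_mem _ hy
        rcases eq_or_lt_of_le hb with hb0 | hb'
        · have ha1 : a = 1 := by linarith
          rw [← hb0, ha1, zero_smul, one_smul, add_zero]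
          exact mem_insert_of_mem _ hx
        have hfx := hfpos x hx
        have hfy := hfpos y hy
        set x' : V := (f x)⁻¹ • x with hx'
        set y' : V := (f y)⁻¹ • y with hy'
        have hx'mem : x' ∈ pre Ω := smul_mem_pre (inv_pos.2 hfx) hx
        have hy'mem : y' ∈ pre Ω := smul_mem_pre (inv_pos.2 hfy) hy
        have hfx' : f x' = 1 := by
          rw [hx', map_smul, smul_eq_mul, inv_mul_cancel₀ hfx.ne']
        have hfy' : f y' = 1 := by
          rw [hy', map_smul, smul_eq_mul, inv_mul_cancel₀ hfy.ne']
        set t : ℝ := a * f x with ht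
        set s : ℝ := b * f y with hs
        have htpos : 0 < t := mul_pos ha' hfx
        have hspos : 0 < s := mul_pos hb' hfy
        have hts : 0 < t + s := by linarith
        have hp : (t / (t + s)) • x' + (s / (t + s)) • y' ∈
            {x : V | f x = 1 ∧ x ∈ pre Ω} := by
          apply hslice ⟨hfx', hx'mem⟩ ⟨hfy', hy'mem⟩
            (by positivity) (by positivity)
          field_simp
        have hpre : (t / (t + s)) • x' + (s / (t + s)) • y' ∈ pre Ω := hp.2
        have := smul_mem_pre hts hpre
        have heq : (t + s) • ((t / (t + s)) • x' + (s / (t + s)) • y') =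
            a • x + b • y := by
          rw [hx', hy', ht, hs]
          match_scalars <;> field_simp <;> ring
        rw [heq] at this
        exact mem_insert_of_mem _ this
    · intro c hc x hx
      rcases hx with hx0 | hx
      · subst hx0; simp
      · exact mem_insert_of_mem _ (smul_mem_pre hc hx)

end SphereConvexity
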